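/- Let X be a Hilbert space and f, g : X → ℝ with f twice differentiable and λ-strongly convex (D²f(a)(h,h) ≥ λ‖h‖² for all a, h) with global minimizer a⋆. Let R > 0 and suppose g is weakly lower semicontinuous on the closed ball B_R(a⋆), Fréchet differentiable, and sup_{a ∈ B_R(a⋆)} |f(a) − g(a)| < λR²/4. Then g attains a minimum over B_R(a⋆) at some point a† lying in the open ball {‖a − a⋆‖ < R}, and at this point Dg(a†) = 0. -/

import Mathlib

open Filter
open scoped RealInnerProductSpace
open Topology

lemma weak_cluster {X : Type*} [NormedAddCommGroup X] [InnerProductSpace ℝ X] [CompleteSpace X]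
    (u : ℕ → X) (M : ℝ) (hM : 0 ≤ M) (hb : ∀ n, ‖u n‖ ≤ M) :
    ∃ (x : X) (φ : ℕ → ℕ), StrictMono φ ∧
      ∀ y : X, Tendsto (fun n => ⟪u (φ n), y⟫) atTop (𝓝 ⟪x, y⟫) := by
  have hbd : ∀ n m, ⟪u n, u m⟫ ∈ Set.Icc (-(M * M)) (M * M) := by
    intro n m
    have h1 : |⟪u n, u m⟫| ≤ M * M :=
      (abs_real_inner_le_norm _ _).trans
        (mul_le_mul (hb n) (hb m) (norm_nonneg _) hM)
    exact abs_le.1 h1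
  set F : ℕ → (ℕ → Set.Icc (-(M * M)) (M * M)) := fun n m => ⟨⟪u n, u m⟫, hbd n m⟩ with hF
  obtain ⟨L, -, φ, hφ, hL⟩ := isCompact_univ.tendsto_subseq (x := F) (fun n => Set.mem_univ _)
  have hLm : ∀ m, Tendsto (fun n => ⟪u (φ n), u m⟫) atTop (𝓝 (L m : ℝ)) := by
    intro m
    have h2 : Continuous fun p : ℕ → Set.Icc (-(M * M)) (M * M) => (p m : ℝ) :=
      continuous_subtype_val.comp (continuous_apply m)
    exact (h2.tendsto L).comp hL
  set S : Submodule ℝ X := Submodule.span ℝ (Set.range u) with hS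
  have huS : ∀ n, u n ∈ S.topologicalClosure := fun n =>
    Submodule.le_topologicalClosure _ (Submodule.subset_span (Set.mem_range_self n))
  -- convergence on the span
  have conv_span : ∀ y ∈ S, ∃ l, Tendsto (fun n => ⟪u (φ n), y⟫) atTop (𝓝 l) := by
    intro y hy
    induction hy using Submodule.span_induction with
    | mem x hx =>
      obtain ⟨m, rfl⟩ := hx
      exact ⟨L m, hLm m⟩
    | zero => exact ⟨0, by simpa using tendsto_const_nhds⟩
    | add x y hx hy ihx ihy =>
      obtain ⟨l1, h1⟩ := ihx; obtain ⟨l2, h2⟩ := ihy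
      exact ⟨l1 + l2, by simpa [inner_add_right] using h1.add h2⟩
    | smul c x hx ih =>
      obtain ⟨l, h⟩ := ih
      exact ⟨c * l, by simpa [real_inner_smul_right] using h.const_mul c⟩
  -- Cauchy on the closure of the span
  have cauchy_cl : ∀ y ∈ S.topologicalClosure, CauchySeq (fun n => ⟪u (φ n), y⟫) := by
    intro y hy
    rw [Metric.cauchySeq_iff]
    intro ε hε
    have hy' : y ∈ closure (S : Set X) := by
      rwa [← Submodule.topologicalClosure_coe]
    have hpos : 0 < ε / (3 * (M + 1)) := by positivity
    obtain ⟨z, hzS, hz⟩ := Metric.mem_closure_iff.1 hy' _ hpos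
    obtain ⟨l, hl⟩ := conv_span z hzS
    obtain ⟨N, hN⟩ := Metric.cauchySeq_iff.1 hl.cauchySeq (ε / 3) (by positivity)
    refine ⟨N, fun m hm n hn => ?_⟩
    have key : ∀ k, |⟪u (φ k), y⟫ - ⟪u (φ k), z⟫| ≤ ε / 3 := by
      intro k
      have : |⟪u (φ k), y - z⟫| ≤ M * ‖y - z‖ :=
        (abs_real_inner_le_norm _ _).trans
          (mul_le_mul_of_nonneg_right (hb _) (norm_nonneg _))
      rw [inner_sub_right] at this
      have hyz : ‖y - z‖ ≤ ε / (3 * (M + 1)) := by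
        rw [← dist_eq_norm]; exact hz.le
      have : M * ‖y - z‖ ≤ ε / 3 := by
        calc M * ‖y - z‖ ≤ M * (ε / (3 * (M + 1))) :=
              mul_le_mul_of_nonneg_left hyz hM
          _ ≤ ε / 3 := by
              rw [mul_div_assoc', div_le_div_iff₀ (by positivity) (by norm_num)]
              nlinarith
      linarith [abs_le.1 ‹|⟪u (φ k), y⟫ - ⟪u (φ k), z⟫| ≤ M * ‖y - z‖›,
        abs_nonneg (⟪u (φ k), y⟫ - ⟪u (φ k), z⟫)]
    have h3 := hN m hm n hn
    rw [Real.dist_eq] at h3 ⊢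
    calc |⟪u (φ m), y⟫ - ⟪u (φ n), y⟫|
        ≤ |⟪u (φ m), y⟫ - ⟪u (φ m), z⟫| + |⟪u (φ m), z⟫ - ⟪u (φ n), z⟫|
          + |⟪u (φ n), z⟫ - ⟪u (φ n), y⟫| := by
          have := abs_sub_le (⟪u (φ m), y⟫) (⟪u (φ m), z⟫) (⟪u (φ n), y⟫)
          have := abs_sub_le (⟪u (φ m), z⟫) (⟪u (φ n), z⟫) (⟪u (φ n), y⟫)
          linarith
      _ < ε := by
          have := key m
          have h4 := key n
          rw [abs_sub_comm] at h4
          linarith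
  -- Cauchy everywhere via orthogonal projection
  haveI : CompleteSpace S.topologicalClosure :=
    S.isClosed_topologicalClosure.completeSpace_coe
  have cauchy_all : ∀ y : X, CauchySeq (fun n => ⟪u (φ n), y⟫) := by
    intro y
    set P := Submodule.orthogonalProjectionOnto S.topologicalClosure
    have hsplit : ∀ n, ⟪u (φ n), y⟫ = ⟪u (φ n), (P y : X)⟫ := by
      intro n
      have h0 : ⟪u (φ n), y - (P y : X)⟫ = 0 :=
        Submodule.inner_right_of_mem_orthogonal (huS (φ n))
          (Submodule.sub_starProjection_mem_orthogonal (K := S.topologicalClosure) y)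
      rw [inner_sub_right] at h0
      linarith
    simp only [hsplit]
    exact cauchy_cl _ (P y).2
  have key : ∀ y : X, ∃ l, Tendsto (fun n => ⟪u (φ n), y⟫) atTop (𝓝 l) :=
    fun y => cauchySeq_tendsto_of_complete (cauchy_all y)
  choose T hT using key
  have Tadd : ∀ y z, T (y + z) = T y + T z := fun y z =>
    tendsto_nhds_unique (hT (y + z)) (by simpa [inner_add_right] using (hT y).add (hT z))
  have Tsmul : ∀ (c : ℝ) y, T (c • y) = c * T y := fun c y =>
    tendsto_nhds_unique (hT (c • y))
      (by simpa [real_inner_smul_right] using (hT y).const_mul c)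
  have Tbound : ∀ y, ‖T y‖ ≤ M * ‖y‖ := by
    intro y
    rw [Real.norm_eq_abs]
    refine le_of_tendsto (hT y).abs (Eventually.of_forall fun n => ?_)
    exact (abs_real_inner_le_norm _ _).trans
      (mul_le_mul_of_nonneg_right (hb _) (norm_nonneg _))
  let Tlin : X →ₗ[ℝ] ℝ :=
    { toFun := T, map_add' := Tadd, map_smul' := Tsmul }
  let Tclm : X →L[ℝ] ℝ := Tlin.mkContinuous M Tbound
  refine ⟨(InnerProductSpace.toDual ℝ X).symm Tclm, φ, hφ, fun y => ?_⟩
  rw [InnerProductSpace.toDual_symm_apply]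
  exact hT y

lemma strong_lower {X : Type*} [NormedAddCommGroup X] [InnerProductSpace ℝ X]
    (f : X → ℝ) (f' : X → X →L[ℝ] ℝ) (f'' : X → X →L[ℝ] X →L[ℝ] ℝ)
    (hf' : ∀ a, HasFDerivAt f (f' a) a) (hf'' : ∀ a, HasFDerivAt f' (f'' a) a)
    (lam : ℝ) (hconv : ∀ a h : X, lam * ‖h‖ ^ 2 ≤ f'' a h h)
    (astar : X) (hstar : f' astar = 0) (a : X) :
    f astar + lam / 2 * ‖a - astar‖ ^ 2 ≤ f a := by
  set h : X := a - astar with hh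
  set c : ℝ → X := fun t => astar + t • h with hc
  have hcd : ∀ t : ℝ, HasDerivAt c h t := by
    intro t
    have := ((hasDerivAt_id t).smul_const h).const_add astar
    simp only [one_smul] at this; exact this
  set q : ℝ → ℝ := fun t => f' (c t) h - lam * ‖h‖ ^ 2 * t with hq
  have hqd : ∀ t, HasDerivAt q (f'' (c t) h h - lam * ‖h‖ ^ 2) t := by
    intro t
    have h1 : HasDerivAt (fun s => f' (c s)) ((f'' (c t)) h) t :=
      (hf'' (c t)).comp_hasDerivAt t (hcd t)
    have h2 : HasDerivAt (fun s => f' (c s) h) ((f'' (c t)) h h) t := by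
      have h3 := (ContinuousLinearMap.apply ℝ ℝ h).hasFDerivAt.comp_hasDerivAt t h1
      exact h3
    have h4 := h2.sub (((hasDerivAt_id t).const_mul (lam * ‖h‖ ^ 2)))
    rw [mul_one] at h4; exact h4
  have hqmono : Monotone q :=
    monotone_of_deriv_nonneg (fun t => (hqd t).differentiableAt) (fun t => by
      rw [(hqd t).deriv]; have := hconv (c t) h; linarith)
  have hq0 : q 0 = 0 := by simp [hq, hc, hstar]
  have hqnn : ∀ t : ℝ, 0 ≤ t → 0 ≤ q t := fun t ht => hq0 ▸ hqmono ht
  set ψ : ℝ → ℝ := fun t => f (c t) - lam / 2 * ‖h‖ ^ 2 * t ^ 2 with hψ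
  have hψd : ∀ t, HasDerivAt ψ (q t) t := by
    intro t
    have h1 : HasDerivAt (fun s => f (c s)) (f' (c t) h) t :=
      (hf' (c t)).comp_hasDerivAt t (hcd t)
    have h2 : HasDerivAt (fun s : ℝ => lam / 2 * ‖h‖ ^ 2 * s ^ 2)
        (lam / 2 * ‖h‖ ^ 2 * (2 * t)) t := by
      simpa using ((hasDerivAt_pow 2 t).const_mul (lam / 2 * ‖h‖ ^ 2))
    have := h1.sub h2
    rw [show q t = f' (c t) h - lam / 2 * ‖h‖ ^ 2 * (2 * t) by
      show f' (c t) h - lam * ‖h‖ ^ 2 * t = _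
      ring]
    exact this
  have hψmono : MonotoneOn ψ (Set.Icc 0 1) := by
    refine monotoneOn_of_deriv_nonneg (convex_Icc 0 1)
      (fun t _ => (hψd t).continuousAt.continuousWithinAt) ?_ ?_
    · intro t ht
      exact (hψd t).differentiableAt.differentiableWithinAt
    · intro t ht
      rw [interior_Icc] at ht
      rw [(hψd t).deriv]
      exact hqnn t ht.1.le
  have h01 : ψ 0 ≤ ψ 1 :=
    hψmono (Set.mem_Icc.2 ⟨le_refl 0, zero_le_one⟩) (Set.mem_Icc.2 ⟨zero_le_one, le_refl 1⟩)
      zero_le_one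
  have e0 : ψ 0 = f astar := by simp [hψ, hc]
  have e1 : ψ 1 = f a - lam / 2 * ‖h‖ ^ 2 := by simp [hψ, hc, hh]
  rw [e0, e1] at h01
  rw [hh] at *
  linarith

/-- If `f` is twice differentiable and λ-strongly convex with global minimizer
`a⋆`, and `g` is differentiable, sequentially weakly lower semicontinuous on the
closed ball `B_R(a⋆)`, and satisfies `|f − g| < λR²/4` there, then `g` attains a
minimum over `B_R(a⋆)` at an interior point `a†`, at which `Dg(a†) = 0`. -/
theorem stmt17 {X : Type*} [NormedAddCommGroup X] [InnerProductSpace ℝ X]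
    [CompleteSpace X]
    (f g : X → ℝ) (f' : X → X →L[ℝ] ℝ) (f'' : X → X →L[ℝ] X →L[ℝ] ℝ)
    (g' : X → X →L[ℝ] ℝ)
    (hf' : ∀ a, HasFDerivAt f (f' a) a) (hf'' : ∀ a, HasFDerivAt f' (f'' a) a)
    (lam : ℝ) (hlam : 0 < lam)
    (hconv : ∀ a h : X, lam * ‖h‖ ^ 2 ≤ f'' a h h)
    (astar : X) (hmin : ∀ a, f astar ≤ f a)
    (R : ℝ) (hR : 0 < R)
    (hg' : ∀ a, HasFDerivAt g (g' a) a)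
    (hlsc : ∀ (x : X) (u : ℕ → X), (∀ n, ‖u n - astar‖ ≤ R) → ‖x - astar‖ ≤ R →
      (∀ y : X, Tendsto (fun n => ⟪u n, y⟫) atTop (nhds ⟪x, y⟫)) →
      g x ≤ Filter.liminf (fun n => g (u n)) atTop)
    (happrox : ∀ a, ‖a - astar‖ ≤ R → |f a - g a| < lam * R ^ 2 / 4) :
    ∃ adag : X, ‖adag - astar‖ < R ∧
      (∀ a, ‖a - astar‖ ≤ R → g adag ≤ g a) ∧ g' adag = 0 := by
  have hstar : f' astar = 0 := by
    have hl : IsLocalMin f astar := Filter.Eventually.of_forall hmin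
    exact hl.hasFDerivAt_eq_zero (hf' astar)
  have hlow : ∀ a, f astar + lam / 2 * ‖a - astar‖ ^ 2 ≤ f a :=
    strong_lower f f' f'' hf' hf'' lam hconv astar hstar
  set S : Set X := {a | ‖a - astar‖ ≤ R} with hSdef
  have hamem : astar ∈ S := by simp [hSdef, hR.le]
  have hbdd : BddBelow (g '' S) := by
    refine ⟨f astar - lam * R ^ 2 / 4, ?_⟩
    rintro _ ⟨a, ha, rfl⟩
    have h1 := abs_lt.1 (happrox a ha)
    have h2 := hmin a
    linarith
  have hne : (g '' S).Nonempty := ⟨g astar, ⟨astar, hamem, rfl⟩⟩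
  obtain ⟨w, -, hwt, hwm⟩ := exists_seq_tendsto_sInf hne hbdd
  choose v hv hgv using hwm
  have hvb : ∀ n, ‖v n‖ ≤ ‖astar‖ + R := by
    intro n
    have h1 := norm_add_le (v n - astar) astar
    have h2 : ‖v n - astar‖ ≤ R := hv n
    simp only [sub_add_cancel] at h1
    linarith
  obtain ⟨x, φ, hφ, hx⟩ := weak_cluster v (‖astar‖ + R) (by positivity) hvb
  have hxS : ‖x - astar‖ ≤ R := by
    have h1 : Tendsto (fun n => ⟪v (φ n), x - astar⟫) atTop (𝓝 ⟪x, x - astar⟫) := hx _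
    have h2 : ∀ n, ⟪v (φ n), x - astar⟫ ≤ R * ‖x - astar‖ + ⟪astar, x - astar⟫ := by
      intro n
      have h3 : ⟪v (φ n) - astar, x - astar⟫ ≤ R * ‖x - astar‖ :=
        (real_inner_le_norm _ _).trans
          (mul_le_mul_of_nonneg_right (hv (φ n)) (norm_nonneg _))
      rw [inner_sub_left] at h3
      linarith
    have h3 := le_of_tendsto h1 (Eventually.of_forall h2)
    have h4 : ‖x - astar‖ ^ 2 ≤ R * ‖x - astar‖ := by
      have h5 : ⟪x - astar, x - astar⟫ = ⟪x, x - astar⟫ - ⟪astar, x - astar⟫ :=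
        inner_sub_left _ _ _
      rw [real_inner_self_eq_norm_sq] at h5
      linarith
    by_contra hcon
    push_neg at hcon
    nlinarith [norm_nonneg (x - astar)]
  have hliminf := hlsc x (fun n => v (φ n)) (fun n => hv (φ n)) hxS (fun y => hx y)
  have htends : Tendsto (fun n => g (v (φ n))) atTop (𝓝 (sInf (g '' S))) := by
    have := hwt.comp hφ.tendsto_atTop
    simpa [Function.comp_def, hgv] using this
  have hgx : g x ≤ sInf (g '' S) := by rwa [htends.liminf_eq] at hliminf
  have hmin' : ∀ a, ‖a - astar‖ ≤ R → g x ≤ g a := fun a ha =>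
    hgx.trans (csInf_le hbdd ⟨a, ha, rfl⟩)
  have hstarS : ‖astar - astar‖ ≤ R := by simp [hR.le]
  have hxlt : ‖x - astar‖ < R := by
    have h1 := abs_lt.1 (happrox x hxS)
    have h2 := abs_lt.1 (happrox astar hstarS)
    have h3 := hmin' astar hstarS
    have h4 := hlow x
    have h5 : ‖x - astar‖ ^ 2 < R ^ 2 := by nlinarith
    nlinarith [norm_nonneg (x - astar)]
  have hloc : IsLocalMin g x := by
    have hball : Metric.ball astar R ⊆ S := fun a ha => by
      rw [Metric.mem_ball, dist_eq_norm] at ha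
      exact ha.le
    have hmem : S ∈ 𝓝 x :=
      Filter.mem_of_superset
        (Metric.isOpen_ball.mem_nhds (by rwa [Metric.mem_ball, dist_eq_norm])) hball
    exact Filter.eventually_of_mem hmem fun a ha => hmin' a ha
  exact ⟨x, hxlt, hmin', hloc.hasFDerivAt_eq_zero (hg' x)⟩
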